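/- Let Σ = (G, σ) be a signed graph with n ≥ 3 vertices and m edges, and let λ₁(Σ) be the largest eigenvalue of its adjacency matrix A(Σ). Let t_s(Σ) denote the number of positive triangles of Σ minus the number of negative triangles of Σ. If t_s(Σ) ≥ 0, then λ₁(Σ)² ≤ m + (6 t_s(Σ))^{2/3}. -/

import Mathlib

open Matrix Finset

open scoped Classical in
/-- `σ` is a sign function on the edges of `G`: symmetric and `±1` on edges. -/
def IsSignFn {n : ℕ} (G : SimpleGraph (Fin n)) (σ : Fin n → Fin n → ℝ) : Prop :=
  (∀ i j, σ i j = σ j i) ∧ ∀ i j, G.Adj i j → σ i j = 1 ∨ σ i j = -1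

/-- The adjacency matrix of the signed graph `(G, σ)`. -/
def signedAdj {n : ℕ} (G : SimpleGraph (Fin n)) [DecidableRel G.Adj]
    (σ : Fin n → Fin n → ℝ) : Matrix (Fin n) (Fin n) ℝ :=
  fun i j => if G.Adj i j then σ i j else 0

/-- The sign of a walk: the product of the signs of its edges (with multiplicity). -/
def walkSign {V : Type*} {G : SimpleGraph V} (σ : V → V → ℝ) {u v : V} (w : G.Walk u v) : ℝ :=
  (w.darts.map fun d => σ d.toProd.1 d.toProd.2).prod

/-- A signed graph is balanced if every cycle has sign `+1`. -/
def IsBalanced {V : Type*} (G : SimpleGraph V) (σ : V → V → ℝ) : Prop :=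
  ∀ (u : V) (w : G.Walk u u), w.IsCycle → walkSign σ w = 1

/-- The set of cardinalities of edge sets whose deletion makes `(G, σ)` balanced.
The frustration index is the least element of this set. -/
def FrustrationSet {n : ℕ} (G : SimpleGraph (Fin n)) (σ : Fin n → Fin n → ℝ) : Set ℕ :=
  {k | ∃ F : Finset (Sym2 (Fin n)), ↑F ⊆ G.edgeSet ∧
    IsBalanced (G.deleteEdges ↑F) σ ∧ F.card = k}

/-- `S` induces a balanced complete subgraph of `(G, σ)`:
`S` is a clique and every cycle inside `S` has sign `+1`. -/
def IsBalancedClique {n : ℕ} (G : SimpleGraph (Fin n)) (σ : Fin n → Fin n → ℝ)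
    (S : Finset (Fin n)) : Prop :=
  G.IsClique (S : Set (Fin n)) ∧
    ∀ (u : Fin n) (w : G.Walk u u), w.IsCycle → (∀ v ∈ w.support, v ∈ S) → walkSign σ w = 1

/-- The set of cardinalities of balanced cliques of `(G, σ)`.
The balanced clique number is the greatest element of this set. -/
def BalancedCliqueSet {n : ℕ} (G : SimpleGraph (Fin n)) (σ : Fin n → Fin n → ℝ) : Set ℕ :=
  {k | ∃ S : Finset (Fin n), IsBalancedClique G σ S ∧ S.card = k}

/-- Switching equivalence of two sign functions on the same underlying graph. -/
def SwitchingEquiv {n : ℕ} (G : SimpleGraph (Fin n)) (σ₁ σ₂ : Fin n → Fin n → ℝ) : Prop :=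
  ∃ η : Fin n → ℝ, (∀ v, η v = 1 ∨ η v = -1) ∧ ∀ i j, G.Adj i j → σ₂ i j = η i * σ₁ i j * η j

/-- Six times the number of positive triangles of `(G, σ)`:
the number of ordered triples forming a positive triangle. -/
noncomputable def posTriCount6 {n : ℕ} (G : SimpleGraph (Fin n))
    (σ : Fin n → Fin n → ℝ) : ℕ :=
  Nat.card {t : Fin n × Fin n × Fin n //
    G.Adj t.1 t.2.1 ∧ G.Adj t.2.1 t.2.2 ∧ G.Adj t.2.2 t.1 ∧
      σ t.1 t.2.1 * σ t.2.1 t.2.2 * σ t.2.2 t.1 = 1}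

/-- Six times the number of negative triangles of `(G, σ)`. -/
noncomputable def negTriCount6 {n : ℕ} (G : SimpleGraph (Fin n))
    (σ : Fin n → Fin n → ℝ) : ℕ :=
  Nat.card {t : Fin n × Fin n × Fin n //
    G.Adj t.1 t.2.1 ∧ G.Adj t.2.1 t.2.2 ∧ G.Adj t.2.2 t.1 ∧
      σ t.1 t.2.1 * σ t.2.1 t.2.2 * σ t.2.2 t.1 = -1}

lemma myConjPow {N : ℕ} (U D : Matrix (Fin N) (Fin N) ℝ) (hU : star U * U = 1) (k : ℕ) :
    (U * D * star U) ^ k = U * D ^ k * star U := by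
  induction k with
  | zero => simp [mul_eq_one_comm.mp hU]
  | succ k ih =>
      rw [pow_succ, pow_succ, ih, mul_assoc, mul_assoc,
        show star U * (U * D * star U) = D * star U by
          rw [← mul_assoc, ← mul_assoc, hU, one_mul]]
      simp [mul_assoc]

lemma myTrPow {N : ℕ} {A : Matrix (Fin N) (Fin N) ℝ} (hA : A.IsHermitian) (k : ℕ) :
    (A ^ k).trace = ∑ i, hA.eigenvalues i ^ k := by
  have hD : Matrix.diagonal (RCLike.ofReal ∘ hA.eigenvalues) = Matrix.diagonal hA.eigenvalues := by
    funext i j; simp [Matrix.diagonal]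
  have hspec := hA.spectral_theorem
  rw [hD, Unitary.conjStarAlgAut_apply] at hspec
  set U : Matrix (Fin N) (Fin N) ℝ := (hA.eigenvectorUnitary : Matrix (Fin N) (Fin N) ℝ) with hUdef
  have hU : star U * U = 1 := (Unitary.mem_iff.mp (hA.eigenvectorUnitary).2).1
  conv_lhs => rw [hspec]
  rw [myConjPow _ _ hU, Matrix.trace_mul_cycle, hU, one_mul,
    Matrix.diagonal_pow, Matrix.trace_diagonal]
  simp [Pi.pow_apply]


/-- If `t_s(Σ) ≥ 0`, then `λ₁(Σ)² ≤ m + (6 t_s(Σ))^(2/3)`. -/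
theorem stmt_14 {n : ℕ} (hn : 3 ≤ n) (G : SimpleGraph (Fin n)) [DecidableRel G.Adj]
    (σ : Fin n → Fin n → ℝ) (hσ : IsSignFn G σ)
    (hA : (signedAdj G σ).IsHermitian)
    (lam1 : ℝ) (hlam : IsGreatest (Set.range hA.eigenvalues) lam1)
    (ts : ℤ) (hts : 6 * ts = (posTriCount6 G σ : ℤ) - (negTriCount6 G σ : ℤ))
    (h0 : 0 ≤ ts) :
    lam1 ^ 2 ≤ (G.edgeFinset.card : ℝ) + (6 * (ts : ℝ)) ^ ((2 : ℝ) / 3) := by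
  classical
  set A := signedAdj G σ with hAdef
  set ev := hA.eigenvalues with hev
  set m : ℝ := (G.edgeFinset.card : ℝ) with hm
  -- σ is ±1 on edges
  have hsig : ∀ i j, G.Adj i j → σ i j * σ j i = 1 := by
    intro i j h
    rw [← hσ.1 i j]
    rcases hσ.2 i j h with h1 | h1 <;> rw [h1] <;> norm_num
  -- trace identities
  have h1 : ∑ i, ev i = 0 := by
    have := myTrPow hA 1
    simp only [pow_one] at this
    rw [← this]
    simp [Matrix.trace, Matrix.diag, hAdef, signedAdj]
  have h2 : ∑ i, ev i ^ 2 = 2 * m := by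
    rw [← myTrPow hA 2]
    have : (A ^ 2).trace = ∑ i, ∑ j, A i j * A j i := by
      simp [pow_two, Matrix.trace, Matrix.diag, Matrix.mul_apply]
    rw [this]
    have : ∀ i : Fin n, ∑ j, A i j * A j i = (G.degree i : ℝ) := by
      intro i
      rw [show (G.degree i : ℝ) = ∑ j, (if G.Adj i j then (1:ℝ) else 0) by
        rw [Finset.sum_boole, SimpleGraph.degree, SimpleGraph.neighborFinset_eq_filter]]
      apply Finset.sum_congr rfl
      intro j _
      by_cases h : G.Adj i j
      · simp [hAdef, signedAdj, h, h.symm, hsig i j h]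
      · simp [hAdef, signedAdj, h, fun hh : G.Adj j i => h hh.symm]
    rw [Finset.sum_congr rfl (fun i _ => this i)]
    rw [← Nat.cast_sum]
    rw [SimpleGraph.sum_degrees_eq_twice_card_edges]
    push_cast [hm]
    ring
  have h3 : ∑ i, ev i ^ 3 = 6 * (ts : ℝ) := by
    rw [← myTrPow hA 3]
    have e1 : (A ^ 3).trace = ∑ i, ∑ k, ∑ j, A i j * A j k * A k i := by
      simp only [pow_succ, pow_zero, one_mul, Matrix.trace, Matrix.diag, Matrix.mul_apply,
        Finset.sum_mul]
    have e2 : (A ^ 3).trace = ∑ t : Fin n × Fin n × Fin n,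
        A t.1 t.2.1 * A t.2.1 t.2.2 * A t.2.2 t.1 := by
      rw [e1, Fintype.sum_prod_type]
      apply Finset.sum_congr rfl; intro i _
      rw [Fintype.sum_prod_type, Finset.sum_comm]
    set P : Fin n × Fin n × Fin n → Prop := fun t =>
      G.Adj t.1 t.2.1 ∧ G.Adj t.2.1 t.2.2 ∧ G.Adj t.2.2 t.1 ∧
        σ t.1 t.2.1 * σ t.2.1 t.2.2 * σ t.2.2 t.1 = 1 with hP
    set N : Fin n × Fin n × Fin n → Prop := fun t =>
      G.Adj t.1 t.2.1 ∧ G.Adj t.2.1 t.2.2 ∧ G.Adj t.2.2 t.1 ∧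
        σ t.1 t.2.1 * σ t.2.1 t.2.2 * σ t.2.2 t.1 = -1 with hN
    have e3 : ∀ t : Fin n × Fin n × Fin n,
        A t.1 t.2.1 * A t.2.1 t.2.2 * A t.2.2 t.1 =
          (if P t then (1:ℝ) else 0) - (if N t then (1:ℝ) else 0) := by
      rintro ⟨i, j, k⟩
      by_cases hij : G.Adj i j
      · by_cases hjk : G.Adj j k
        · by_cases hki : G.Adj k i
          · have : A i j * A j k * A k i = σ i j * σ j k * σ k i := by
              simp [hAdef, signedAdj, hij, hjk, hki]
            rcases hσ.2 i j hij with a1 | a1 <;> rcases hσ.2 j k hjk with a2 | a2 <;>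
              rcases hσ.2 k i hki with a3 | a3 <;>
              simp only [hP, hN, this, a1, a2, a3] <;> norm_num [hij, hjk, hki]
          · simp [hAdef, signedAdj, hki, hP, hN]
        · simp [hAdef, signedAdj, hjk, hP, hN]
      · simp [hAdef, signedAdj, hij, hP, hN]
    rw [e2, Finset.sum_congr rfl (fun t _ => e3 t), Finset.sum_sub_distrib,
      Finset.sum_boole, Finset.sum_boole]
    have cP : posTriCount6 G σ = (Finset.univ.filter P).card := by
      rw [posTriCount6, Nat.card_eq_fintype_card, Fintype.card_subtype]
    have cN : negTriCount6 G σ = (Finset.univ.filter N).card := by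
      rw [negTriCount6, Nat.card_eq_fintype_card, Fintype.card_subtype]
    have : ((posTriCount6 G σ : ℝ)) - (negTriCount6 G σ : ℝ) = 6 * (ts : ℝ) := by
      have := congrArg (fun z : ℤ => (z : ℝ)) hts
      push_cast at this
      linarith
    rw [← this, cP, cN]
  -- analytic part
  obtain ⟨i0, hi0⟩ := hlam.1
  have hub : ∀ i, ev i ≤ lam1 := fun i => hlam.2 ⟨i, rfl⟩
  have hlam0 : 0 ≤ lam1 := by
    by_contra hcon
    push_neg at hcon
    have hs : ∑ i, ev i ≤ ∑ _i : Fin n, lam1 := Finset.sum_le_sum fun i _ => hub i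
    rw [Finset.sum_const, Finset.card_univ, Fintype.card_fin, nsmul_eq_mul] at hs
    rw [h1] at hs
    have hn0 : (0:ℝ) < n := by positivity
    nlinarith
  set s2 : ℝ := ∑ i ∈ Finset.univ.erase i0, ev i ^ 2 with hs2def
  have hsplit2 : lam1 ^ 2 + s2 = 2 * m := by
    have hsum := Finset.add_sum_erase Finset.univ (fun i => ev i ^ 2) (Finset.mem_univ i0)
    simp only [hi0] at hsum
    rw [h2] at hsum
    rw [hs2def]
    linarith
  have hs2 : 0 ≤ s2 := Finset.sum_nonneg fun i _ => sq_nonneg _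
  set T : ℝ := 6 * (ts : ℝ) with hTdef
  have hT0 : 0 ≤ T := by
    have : (0:ℝ) ≤ (ts : ℝ) := by exact_mod_cast h0
    linarith
  have hcube : -(s2 * Real.sqrt s2) ≤ ∑ i ∈ Finset.univ.erase i0, ev i ^ 3 := by
    have hbd : ∀ i ∈ Finset.univ.erase i0, -(ev i ^ 2 * Real.sqrt s2) ≤ ev i ^ 3 := by
      intro i hi
      have h1' : ev i ^ 2 ≤ s2 :=
        Finset.single_le_sum (fun j _ => sq_nonneg (ev j)) hi
      have h2' : |ev i| ≤ Real.sqrt s2 := by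
        rw [← Real.sqrt_sq_eq_abs]
        exact Real.sqrt_le_sqrt h1'
      have h3' : |ev i ^ 3| ≤ ev i ^ 2 * Real.sqrt s2 := by
        have : |ev i ^ 3| = ev i ^ 2 * |ev i| := by
          rw [abs_pow]
          rw [show |ev i| ^ 3 = |ev i| ^ 2 * |ev i| by ring, sq_abs]
        rw [this]
        exact mul_le_mul_of_nonneg_left h2' (sq_nonneg _)
      have := neg_abs_le (ev i ^ 3)
      linarith
    have hrw : ∑ i ∈ Finset.univ.erase i0, -(ev i ^ 2 * Real.sqrt s2) = -(s2 * Real.sqrt s2) := by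
      rw [Finset.sum_neg_distrib, ← Finset.sum_mul, ← hs2def]
    calc -(s2 * Real.sqrt s2) = ∑ i ∈ Finset.univ.erase i0, -(ev i ^ 2 * Real.sqrt s2) :=
          hrw.symm
      _ ≤ _ := Finset.sum_le_sum hbd
  have hkey : lam1 ^ 3 ≤ T + s2 * Real.sqrt s2 := by
    have := Finset.add_sum_erase Finset.univ (fun i => ev i ^ 3) (Finset.mem_univ i0)
    simp only [hi0] at this
    rw [h3] at this
    linarith
  set c : ℝ := T ^ ((2:ℝ)/3) with hcdef
  have hc0 : 0 ≤ c := Real.rpow_nonneg hT0 _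
  have hTc : T = c * Real.sqrt c := by
    rw [Real.sqrt_eq_rpow, hcdef, ← Real.rpow_mul hT0,
      ← Real.rpow_add' hT0 (by norm_num : (2:ℝ)/3 + 2/3 * (1/2) ≠ 0)]
    norm_num
  change lam1 ^ 2 ≤ m + c
  by_contra hcon
  push_neg at hcon
  have hs2lt : s2 < m - c := by linarith
  have hmc0 : 0 ≤ m - c := le_trans hs2 hs2lt.le
  have hm0 : 0 ≤ m := Nat.cast_nonneg _
  have hmono : s2 * Real.sqrt s2 ≤ (m - c) * Real.sqrt (m - c) :=
    mul_le_mul hs2lt.le (Real.sqrt_le_sqrt hs2lt.le) (Real.sqrt_nonneg _) hmc0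
  have e1 : c * Real.sqrt c ≤ c * Real.sqrt (m + c) :=
    mul_le_mul_of_nonneg_left (Real.sqrt_le_sqrt (by linarith)) hc0
  have e2 : (m - c) * Real.sqrt (m - c) ≤ (m - c) * Real.sqrt (m + c) :=
    mul_le_mul_of_nonneg_left (Real.sqrt_le_sqrt (by linarith)) hmc0
  have e3 : c * Real.sqrt (m + c) + (m - c) * Real.sqrt (m + c) = m * Real.sqrt (m + c) := by
    ring
  have e4 : m * Real.sqrt (m + c) ≤ (m + c) * Real.sqrt (m + c) :=
    mul_le_mul_of_nonneg_right (by linarith) (Real.sqrt_nonneg _)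
  have hmc0' : (0:ℝ) ≤ m + c := by linarith
  have hsq : Real.sqrt (m + c) < lam1 := by
    have := Real.sqrt_lt_sqrt hmc0' hcon
    rwa [Real.sqrt_sq hlam0] at this
  have hsqsq : Real.sqrt (m + c) ^ 2 = m + c := Real.sq_sqrt hmc0'
  have hlow : (m + c) * Real.sqrt (m + c) < lam1 ^ 3 := by
    nlinarith [Real.sqrt_nonneg (m + c)]
  linarith
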